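/- Let K be a field and let A be the quotient of the free K-algebra on three generators a, x, y by the two-sided ideal generated by a·x − y, a·y, x·a, y·a, x², y², x·y, y·x. Then there is no K-algebra antihomomorphism S : A → A (equivalently, no K-algebra homomorphism S : A → Aᵐᵒᵖ into the opposite algebra) satisfying S(x) = x and S(y) = y. -/

import Mathlib

/-- The set of generators a·x − y, a·y, x·a, y·a, x², y², x·y, y·x of the two-sided ideal,
where a, x, y are the three generators of the free algebra. -/
noncomputable def paperGens (K : Type*) [Field K] : Set (FreeAlgebra K (Fin 3)) :=
  letI a := FreeAlgebra.ι K (0 : Fin 3)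
  letI x := FreeAlgebra.ι K (1 : Fin 3)
  letI y := FreeAlgebra.ι K (2 : Fin 3)
  {a * x - y, a * y, x * a, y * a, x ^ 2, y ^ 2, x * y, y * x}

/-- The relation identifying each ideal generator with 0, so that `RingQuot` of it is the
quotient of the free algebra by the two-sided ideal generated by `paperGens K`. -/
def paperRel (K : Type*) [Field K] :
    FreeAlgebra K (Fin 3) → FreeAlgebra K (Fin 3) → Prop :=
  fun p q => p ∈ paperGens K ∧ q = 0

/-- A = K⟨a,x,y⟩ / ⟨a·x − y, a·y, x·a, y·a, x², y², x·y, y·x⟩. -/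
abbrev paperA (K : Type*) [Field K] : Type _ := RingQuot (paperRel K)

/-- The quotient map onto A. -/
noncomputable def paperMk (K : Type*) [Field K] : FreeAlgebra K (Fin 3) →ₐ[K] paperA K :=
  RingQuot.mkAlgHom K (paperRel K)


open Matrix in
noncomputable def paperFree (K : Type*) [Field K] :
    FreeAlgebra K (Fin 3) →ₐ[K] Matrix (Fin 3) (Fin 3) K :=
  FreeAlgebra.lift K ![single 0 1 1, single 1 2 1, single 0 2 1]

open Matrix in
lemma paperFree_rel (K : Type*) [Field K] {p q : FreeAlgebra K (Fin 3)}
    (h : paperRel K p q) : paperFree K p = paperFree K q := by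
  obtain ⟨hp, rfl⟩ := h
  rw [map_zero]
  simp only [paperGens, Set.mem_insert_iff, Set.mem_singleton_iff] at hp
  rcases hp with rfl|rfl|rfl|rfl|rfl|rfl|rfl|rfl <;>
    simp [paperFree, pow_two, Matrix.single_mul_single_same,
      Matrix.single_mul_single_of_ne, show (2:Fin 3) ≠ 0 by decide,
      show (2:Fin 3) ≠ 1 by decide, show (1:Fin 3) ≠ 0 by decide,
      show (0:Fin 3) ≠ 1 by decide, sub_eq_zero]

noncomputable def paperRepr (K : Type*) [Field K] :
    paperA K →ₐ[K] Matrix (Fin 3) (Fin 3) K :=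
  RingQuot.liftAlgHom K ⟨paperFree K, fun _ _ h => paperFree_rel K h⟩

/-- There is no K-algebra antihomomorphism S : A → A (i.e. K-algebra homomorphism
A → Aᵐᵒᵖ) with S(x) = x and S(y) = y. -/
theorem stmt9 (K : Type*) [Field K] :
    ¬ ∃ S : paperA K →ₐ[K] (paperA K)ᵐᵒᵖ,
        S (paperMk K (FreeAlgebra.ι K (1 : Fin 3)))
            = MulOpposite.op (paperMk K (FreeAlgebra.ι K (1 : Fin 3))) ∧
        S (paperMk K (FreeAlgebra.ι K (2 : Fin 3)))
            = MulOpposite.op (paperMk K (FreeAlgebra.ι K (2 : Fin 3))) := by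
  rintro ⟨S, hx, hy⟩
  set a := FreeAlgebra.ι K (0 : Fin 3)
  set x := FreeAlgebra.ι K (1 : Fin 3)
  set y := FreeAlgebra.ι K (2 : Fin 3)
  have hrel : paperMk K (a * x - y) = paperMk K 0 :=
    RingQuot.mkAlgHom_rel K ⟨by simp [paperGens, a, x, y], rfl⟩
  have hax : paperMk K a * paperMk K x = paperMk K y := by
    have := hrel
    rw [map_sub, map_mul, map_zero, sub_eq_zero] at this
    exact this
  have hS := congrArg S hax
  rw [map_mul, hx, hy] at hS
  have key : paperMk K y = paperMk K x * (S (paperMk K a)).unop := by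
    have : MulOpposite.op (paperMk K x * (S (paperMk K a)).unop)
        = MulOpposite.op (paperMk K y) := by
      rw [MulOpposite.op_mul, MulOpposite.op_unop, ← hS]
    exact (MulOpposite.op_injective this).symm
  have hmat := congrArg (fun m => paperRepr K m 0 2) key
  simp only [map_mul] at hmat
  have hrx : paperRepr K (paperMk K x) = Matrix.single 1 2 1 := by
    simp [paperRepr, paperMk, RingQuot.liftAlgHom_mkAlgHom_apply, paperFree, x]
  have hry : paperRepr K (paperMk K y) = Matrix.single 0 2 1 := by
    simp [paperRepr, paperMk, RingQuot.liftAlgHom_mkAlgHom_apply, paperFree, y]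
  rw [hrx, hry] at hmat
  simp [Matrix.mul_apply, Matrix.single] at hmat
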